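/- Fix integers G, K, d ≥ 1, N ≥ 1, an integer g with 0 ≤ g ≤ G, and integers A_{jk} (j ∈ {1,…,G}, k ∈ {1,…,K}) and n_i (i ∈ {1,…,g}). Then the following two statements are equivalent. (I): (1) A_{jk} ≥ d for all j,k; (2) N ≥ Kd and n_i ≥ Kd for all i ∈ {1,…,g}; (3) for all subsets J_r ⊆ {1,…,G}×{1,…,K} and J_t ⊆ {1,…,g}: Σ_{(j,k)∈J_r} (A_{jk} − d) + Σ_{i∈J_t} K(n_i − Kd) ≥ Kd · Σ_{(j,k)∈J_r} |J_t \ {j}|. (II): N ≥ Kd and there exist real numbers f^r_{jk,i} ≥ 0 and f^t_{jk,i} ≥ 0, defined for all j ∈ {1,…,G}, k ∈ {1,…,K} and i ∈ {1,…,g} with i ≠ j, such that: f^r_{jk,i} + f^t_{jk,i} ≥ Kd for every such triple (j,k,i); Σ_{i∈{1,…,g}\{j}} f^r_{jk,i} ≤ A_{jk} − d for all j,k; and Σ_{(j,k): j≠i} f^t_{jk,i} ≤ K(n_i − Kd) for all i ∈ {1,…,g}. -/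

import Mathlib

open Finset

lemma sum_count_le {ι β γ : Type*} [Fintype β] (I : Finset ι)
    (Q : ι → β → Prop) [∀ i b, Decidable (Q i b)] (tgt : Finset γ)
    (F : ι → β → γ)
    (hinj : ∀ i ∈ I, ∀ b : β, ∀ i' ∈ I, ∀ b' : β, F i b = F i' b' → i = i' ∧ b = b')
    (hmem : ∀ i ∈ I, ∀ b : β, Q i b → F i b ∈ tgt) :
    ∑ i ∈ I, (Finset.univ.filter (Q i)).card ≤ tgt.card := by
  classical
  rw [← Finset.card_sigma]
  apply Finset.card_le_card_of_injOn (fun z => F z.1 z.2)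
  · rintro ⟨i, b⟩ hz
    rw [Finset.mem_coe, Finset.mem_sigma] at hz
    exact hmem i hz.1 b (by simpa using hz.2)
  · rintro ⟨i, b⟩ hz ⟨i', b'⟩ hz' h
    rw [Finset.mem_coe, Finset.mem_sigma] at hz hz'
    obtain ⟨h1, h2⟩ := hinj i hz.1 b i' hz'.1 b' h
    subst h1; subst h2; rfl

abbrev IASlot (G K D : ℕ) :=
  ((Fin G × Fin K) × ℕ) ⊕ ((Fin G × ℕ) ⊕ ((Fin G × Fin K) × Fin G × Fin D))

abbrev iaSlotR (G K D : ℕ) (R : Fin G × Fin K → ℕ) (p : Fin G × Fin K) :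
    Finset (IASlot G K D) :=
  (Finset.range (R p)).image fun m => Sum.inl (p, m)

abbrev iaSlotT (G K D : ℕ) (T : Fin G → ℕ) (i : Fin G) : Finset (IASlot G K D) :=
  (Finset.range (T i)).image fun m => Sum.inr (Sum.inl (i, m))

abbrev iaT (G K g D : ℕ) (R : Fin G × Fin K → ℕ) (T : Fin G → ℕ)
    (x : (Fin G × Fin K) × Fin G × Fin D) : Finset (IASlot G K D) :=
  if ((x.2.1 : ℕ) < g ∧ x.2.1 ≠ x.1.1) then
    iaSlotR G K D R x.1 ∪ iaSlotT G K D T x.2.1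
  else {Sum.inr (Sum.inr x)}

lemma flow_exists (G K g D : ℕ) (R : Fin G × Fin K → ℕ) (T : Fin G → ℕ)
    (h : ∀ (Jr : Finset (Fin G × Fin K)) (Jt : Finset (Fin G)),
      (∀ i ∈ Jt, (i : ℕ) < g) →
      D * ∑ p ∈ Jr, (Jt.erase p.1).card ≤ ∑ p ∈ Jr, R p + ∑ i ∈ Jt, T i) :
    ∃ fr ft : Fin G × Fin K → Fin G → ℕ,
      (∀ (p : Fin G × Fin K) (i : Fin G), (i : ℕ) < g → i ≠ p.1 → fr p i + ft p i = D) ∧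
      (∀ p : Fin G × Fin K,
        ∑ i ∈ Finset.univ.filter (fun i : Fin G => (i : ℕ) < g ∧ i ≠ p.1), fr p i ≤ R p) ∧
      (∀ i : Fin G, ∑ p ∈ Finset.univ.filter
          (fun p : Fin G × Fin K => p.1 ≠ i), ft p i ≤ T i) := by
  classical
  set t := iaT G K g D R T with ht
  have hcardR : ∀ p, (iaSlotR G K D R p).card = R p := by
    intro p
    rw [iaSlotR, Finset.card_image_of_injective _
      (fun a b hab => by simpa using hab), Finset.card_range]
  have hcardT : ∀ i, (iaSlotT G K D T i).card = T i := by
    intro i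
    rw [iaSlotT, Finset.card_image_of_injective _
      (fun a b hab => by simpa using hab), Finset.card_range]
  -- Hall's condition
  have hall : ∀ s : Finset ((Fin G × Fin K) × Fin G × Fin D),
      s.card ≤ (s.biUnion t).card := by
    intro s
    set sv := s.filter (fun x => (x.2.1 : ℕ) < g ∧ x.2.1 ≠ x.1.1) with hsv
    set si := s.filter (fun x => ¬ ((x.2.1 : ℕ) < g ∧ x.2.1 ≠ x.1.1)) with hsi
    set Jr := sv.image Prod.fst with hJr
    set Jt := sv.image (fun x => x.2.1) with hJt
    set Tr := sv.image (fun x => (x.1, x.2.1)) with hTr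
    set B : Finset (IASlot G K D) :=
      (Jr.biUnion (iaSlotR G K D R) ∪ Jt.biUnion (iaSlotT G K D T)) ∪
        si.image (fun x => Sum.inr (Sum.inr x)) with hB
    have hsub : B ⊆ s.biUnion t := by
      intro b hb
      rw [hB] at hb
      rcases Finset.mem_union.mp hb with hb | hb
      · rcases Finset.mem_union.mp hb with hb | hb
        · obtain ⟨p, hp, hbp⟩ := Finset.mem_biUnion.mp hb
          obtain ⟨x, hx, hxp⟩ := Finset.mem_image.mp hp
          refine Finset.mem_biUnion.mpr ⟨x, (Finset.mem_filter.mp hx).1, ?_⟩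
          have hvx := (Finset.mem_filter.mp hx).2
          rw [ht, iaT, if_pos hvx]
          exact Finset.mem_union_left _ (by rw [hxp]; exact hbp)
        · obtain ⟨i, hi, hbi⟩ := Finset.mem_biUnion.mp hb
          obtain ⟨x, hx, hxi⟩ := Finset.mem_image.mp hi
          refine Finset.mem_biUnion.mpr ⟨x, (Finset.mem_filter.mp hx).1, ?_⟩
          have hvx := (Finset.mem_filter.mp hx).2
          rw [ht, iaT, if_pos hvx]
          exact Finset.mem_union_right _ (by rw [hxi]; exact hbi)
      · obtain ⟨x, hx, hxb⟩ := Finset.mem_image.mp hb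
        refine Finset.mem_biUnion.mpr ⟨x, (Finset.mem_filter.mp hx).1, ?_⟩
        have hvx := (Finset.mem_filter.mp hx).2
        rw [ht, iaT, if_neg hvx, Finset.mem_singleton]
        exact hxb.symm
    have hcardB : B.card = (∑ p ∈ Jr, R p + ∑ i ∈ Jt, T i) + si.card := by
      rw [hB]
      rw [Finset.card_union_of_disjoint, Finset.card_union_of_disjoint]
      · congr 1
        · congr 1
          · rw [Finset.card_biUnion]
            · exact Finset.sum_congr rfl (fun p _ => hcardR p)
            · intro p _ q _ hpq
              simp only [Finset.disjoint_left]
              rintro a ha ha'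
              simp only [iaSlotR, Finset.mem_image, Finset.mem_range] at ha ha'
              obtain ⟨m, _, rfl⟩ := ha
              obtain ⟨m', _, hm'⟩ := ha'
              simp only [Sum.inl.injEq, Prod.mk.injEq] at hm'
              exact hpq hm'.1.symm
          · rw [Finset.card_biUnion]
            · exact Finset.sum_congr rfl (fun i _ => hcardT i)
            · intro i _ j _ hij
              simp only [Finset.disjoint_left]
              rintro a ha ha'
              simp only [iaSlotT, Finset.mem_image, Finset.mem_range] at ha ha'
              obtain ⟨m, _, rfl⟩ := ha
              obtain ⟨m', _, hm'⟩ := ha'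
              simp only [Sum.inr.injEq, Sum.inl.injEq, Prod.mk.injEq] at hm'
              exact hij hm'.1.symm
        · exact Finset.card_image_of_injective _ (fun a b hab => by simpa using hab)
      · simp only [Finset.disjoint_left]
        intro a ha ha'
        obtain ⟨p, _, hap⟩ := Finset.mem_biUnion.mp ha
        obtain ⟨i, _, hai⟩ := Finset.mem_biUnion.mp ha'
        simp only [iaSlotR, Finset.mem_image, Finset.mem_range] at hap
        simp only [iaSlotT, Finset.mem_image, Finset.mem_range] at hai
        obtain ⟨m, _, rfl⟩ := hap
        obtain ⟨m', _, hm'⟩ := hai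
        exact absurd hm' (by simp)
      · simp only [Finset.disjoint_left]
        intro a ha ha'
        obtain ⟨x, _, hxa⟩ := Finset.mem_image.mp ha'
        rcases Finset.mem_union.mp ha with hb | hb
        · obtain ⟨p, _, hap⟩ := Finset.mem_biUnion.mp hb
          simp only [iaSlotR, Finset.mem_image, Finset.mem_range] at hap
          obtain ⟨m, _, rfl⟩ := hap
          exact absurd hxa (by simp)
        · obtain ⟨i, _, hai⟩ := Finset.mem_biUnion.mp hb
          simp only [iaSlotT, Finset.mem_image, Finset.mem_range] at hai
          obtain ⟨m, _, rfl⟩ := hai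
          exact absurd hxa (by simp)
    have hsv_card : sv.card ≤ D * Tr.card := by
      have h1 : sv.card ≤ (Tr ×ˢ (Finset.univ : Finset (Fin D))).card := by
        apply Finset.card_le_card_of_injOn (fun x => ((x.1, x.2.1), x.2.2))
        · intro x hx
          rw [Finset.mem_coe, Finset.mem_product]
          exact ⟨Finset.mem_image_of_mem _ hx, Finset.mem_univ _⟩
        · rintro ⟨p, i, u⟩ _ ⟨p', i', u'⟩ _ hh
          simp only [Prod.mk.injEq] at hh
          obtain ⟨⟨rfl, rfl⟩, rfl⟩ := hh
          rfl
      rw [Finset.card_product, Finset.card_univ, Fintype.card_fin, mul_comm] at h1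
      exact h1
    have hTr_card : Tr.card ≤ ∑ p ∈ Jr, (Jt.erase p.1).card := by
      have hsubTr : Tr ⊆ (Jr ×ˢ Jt).filter (fun q => q.2 ≠ q.1.1) := by
        intro q hq
        obtain ⟨x, hx, rfl⟩ := Finset.mem_image.mp hq
        rw [Finset.mem_filter, Finset.mem_product]
        exact ⟨⟨Finset.mem_image_of_mem _ hx, Finset.mem_image_of_mem _ hx⟩,
          (Finset.mem_filter.mp hx).2.2⟩
      refine le_trans (Finset.card_le_card hsubTr) (le_of_eq ?_)
      rw [Finset.card_eq_sum_card_fiberwise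
        (f := Prod.fst) (t := Jr)
        (fun q hq => (Finset.mem_product.mp (Finset.mem_filter.mp hq).1).1)]
      refine Finset.sum_congr rfl (fun p hp => ?_)
      have himg : (((Jr ×ˢ Jt).filter (fun q => q.2 ≠ q.1.1)).filter
          (fun q => q.1 = p)) = (Jt.erase p.1).image (fun i => (p, i)) := by
        ext q
        simp only [Finset.mem_filter, Finset.mem_product, Finset.mem_image,
          Finset.mem_erase]
        constructor
        · rintro ⟨⟨⟨hq1, hq2⟩, hq3⟩, hq4⟩
          exact ⟨q.2, ⟨by rw [← hq4]; exact hq3, hq2⟩, by rw [← hq4]⟩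
        · rintro ⟨i, ⟨hi1, hi2⟩, rfl⟩
          exact ⟨⟨⟨hp, hi2⟩, hi1⟩, rfl⟩
      rw [himg, Finset.card_image_of_injective _
        (fun a b hab => by simpa using hab)]
    have hJt_lt : ∀ i ∈ Jt, (i : ℕ) < g := by
      intro i hi
      obtain ⟨x, hx, rfl⟩ := Finset.mem_image.mp hi
      exact (Finset.mem_filter.mp hx).2.1
    have hDTr := Nat.mul_le_mul_left D hTr_card
    have hJrJt := h Jr Jt hJt_lt
    calc s.card = sv.card + si.card := by
          rw [hsv, hsi, Finset.card_filter_add_card_filter_not]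
      _ ≤ (∑ p ∈ Jr, R p + ∑ i ∈ Jt, T i) + si.card := by omega
      _ = B.card := hcardB.symm
      _ ≤ (s.biUnion t).card := Finset.card_le_card hsub
  obtain ⟨f, hfinj, hft⟩ :=
    (Finset.all_card_le_biUnion_card_iff_exists_injective t).mp hall
  refine ⟨fun p i =>
      (Finset.univ.filter (fun u : Fin D => f (p, i, u) ∈ iaSlotR G K D R p)).card,
    fun p i =>
      (Finset.univ.filter (fun u : Fin D => f (p, i, u) ∈ iaSlotT G K D T i)).card,
    ?_, ?_, ?_⟩
  · intro p i hig hip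
    dsimp only
    have hval : ∀ u : Fin D, f (p, i, u) ∈ iaSlotR G K D R p ∪ iaSlotT G K D T i := by
      intro u
      have h0 := hft (p, i, u)
      rw [ht, iaT] at h0
      simpa [if_pos (show ((i : ℕ) < g ∧ i ≠ p.1) from ⟨hig, hip⟩)] using h0
    have hdisj : ∀ u : Fin D,
        f (p, i, u) ∈ iaSlotT G K D T i ↔ ¬ f (p, i, u) ∈ iaSlotR G K D R p := by
      intro u
      constructor
      · intro h1 h2
        simp only [iaSlotR, iaSlotT, Finset.mem_image, Finset.mem_range] at h1 h2
        obtain ⟨m, _, hm⟩ := h1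
        obtain ⟨m', _, hm'⟩ := h2
        rw [← hm'] at hm
        exact absurd hm (by simp)
      · intro h1
        rcases Finset.mem_union.mp (hval u) with h2 | h2
        · exact absurd h2 h1
        · exact h2
    rw [show (Finset.univ.filter (fun u : Fin D => f (p, i, u) ∈ iaSlotT G K D T i)) =
        (Finset.univ.filter (fun u : Fin D => ¬ f (p, i, u) ∈ iaSlotR G K D R p)) from
      Finset.filter_congr (fun u _ => by rw [hdisj u])]
    rw [Finset.card_filter_add_card_filter_not, Finset.card_univ,
      Fintype.card_fin]
  · intro p
    have hle := sum_count_le (β := Fin D)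
      (Finset.univ.filter (fun i : Fin G => (i : ℕ) < g ∧ i ≠ p.1))
      (fun i u => f (p, i, u) ∈ iaSlotR G K D R p) (iaSlotR G K D R p)
      (fun i u => f (p, i, u))
      (fun i _ u i' _ u' hh => by
        have h2 := hfinj hh
        simp only [Prod.mk.injEq] at h2
        exact ⟨h2.2.1, h2.2.2⟩)
      (fun i _ u hq => hq)
    calc _ ≤ (iaSlotR G K D R p).card := hle
      _ = R p := hcardR p
  · intro i
    have hle := sum_count_le (β := Fin D)
      (Finset.univ.filter (fun p : Fin G × Fin K => p.1 ≠ i))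
      (fun p u => f (p, i, u) ∈ iaSlotT G K D T i) (iaSlotT G K D T i)
      (fun p u => f (p, i, u))
      (fun p _ u p' _ u' hh => by
        have h2 := hfinj hh
        simp only [Prod.mk.injEq] at h2
        exact ⟨h2.1, h2.2.2⟩)
      (fun p _ u hq => hq)
    calc _ ≤ (iaSlotT G K D T i).card := hle
      _ = T i := hcardT i

/-- Corollary 1 of the paper: the subset-counting necessary IA feasibility
conditions of Theorem 1 are equivalent to the existence of a feasible flow
`{fr, ft}` in an associated max-flow network. -/
theorem ia_feasibility_conditions_iff_flow
    (G K d N g : ℕ) (hG : 1 ≤ G) (hK : 1 ≤ K) (hd : 1 ≤ d) (hN : 1 ≤ N) (hg : g ≤ G)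
    (A : Fin G → Fin K → ℤ) (n : Fin G → ℤ) :
    ((∀ j k, (d : ℤ) ≤ A j k) ∧
     (K * d ≤ N ∧ ∀ i : Fin G, (i : ℕ) < g → (K * d : ℤ) ≤ n i) ∧
     (∀ (Jr : Finset (Fin G × Fin K)) (Jt : Finset (Fin G)),
        (∀ i ∈ Jt, (i : ℕ) < g) →
        (K * d : ℤ) * ∑ p ∈ Jr, ((Jt.erase p.1).card : ℤ) ≤
          ∑ p ∈ Jr, (A p.1 p.2 - d) +
          ∑ i ∈ Jt, (K : ℤ) * (n i - K * d)))
    ↔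
    (K * d ≤ N ∧
     ∃ fr ft : Fin G → Fin K → Fin G → ℝ,
       (∀ (j : Fin G) (k : Fin K) (i : Fin G), (i : ℕ) < g → i ≠ j →
          0 ≤ fr j k i ∧ 0 ≤ ft j k i ∧ (K * d : ℝ) ≤ fr j k i + ft j k i) ∧
       (∀ (j : Fin G) (k : Fin K),
          ∑ i ∈ Finset.univ.filter (fun i : Fin G => (i : ℕ) < g ∧ i ≠ j), fr j k i ≤
            (A j k : ℝ) - d) ∧
       (∀ i : Fin G, (i : ℕ) < g →
          ∑ p ∈ Finset.univ.filter (fun p : Fin G × Fin K => p.1 ≠ i), ft p.1 p.2 i ≤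
            (K : ℝ) * ((n i : ℝ) - K * d))) := by
  constructor
  · rintro ⟨h1, ⟨h2N, h2n⟩, h3⟩
    refine ⟨h2N, ?_⟩
    set R : Fin G × Fin K → ℕ := fun p => (A p.1 p.2 - d).toNat with hR
    set T : Fin G → ℕ := fun i =>
      if (i : ℕ) < g then ((K : ℤ) * (n i - K * d)).toNat else 0 with hT
    have hRz : ∀ p : Fin G × Fin K, (R p : ℤ) = A p.1 p.2 - d := by
      intro p
      rw [hR]
      exact Int.toNat_of_nonneg (by linarith [h1 p.1 p.2])
    have hTz : ∀ i : Fin G, (i : ℕ) < g → (T i : ℤ) = (K : ℤ) * (n i - K * d) := by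
      intro i hi
      rw [hT]
      simp only [if_pos hi]
      exact Int.toNat_of_nonneg
        (mul_nonneg (by positivity) (by linarith [h2n i hi]))
    have hnat : ∀ (Jr : Finset (Fin G × Fin K)) (Jt : Finset (Fin G)),
        (∀ i ∈ Jt, (i : ℕ) < g) →
        K * d * ∑ p ∈ Jr, (Jt.erase p.1).card ≤ ∑ p ∈ Jr, R p + ∑ i ∈ Jt, T i := by
      intro Jr Jt hJt
      have hz := h3 Jr Jt hJt
      rw [show (∑ p ∈ Jr, (A p.1 p.2 - d)) = ∑ p ∈ Jr, (R p : ℤ) from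
          Finset.sum_congr rfl (fun p _ => (hRz p).symm),
        show (∑ i ∈ Jt, (K : ℤ) * (n i - K * d)) = ∑ i ∈ Jt, (T i : ℤ) from
          Finset.sum_congr rfl (fun i hi => (hTz i (hJt i hi)).symm)] at hz
      exact_mod_cast hz
    obtain ⟨fr', ft', hpt, hrow, hcol⟩ := flow_exists G K g (K * d) R T hnat
    refine ⟨fun j k i => (fr' (j, k) i : ℝ), fun j k i => (ft' (j, k) i : ℝ), ?_, ?_, ?_⟩
    · intro j k i hig hij
      refine ⟨by positivity, by positivity, ?_⟩
      have := hpt (j, k) i hig hij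
      rw [show (K * d : ℝ) = ((K * d : ℕ) : ℝ) by push_cast; ring, ← this]
      push_cast
      exact le_refl _
    · intro j k
      dsimp only
      have h0 := hrow (j, k)
      have h0' : ((∑ i ∈ Finset.univ.filter
          (fun i : Fin G => (i : ℕ) < g ∧ i ≠ j), fr' (j, k) i : ℕ) : ℝ) ≤
          ((R (j, k) : ℤ) : ℝ) := by exact_mod_cast h0
      rw [hRz (j, k)] at h0'
      push_cast at h0' ⊢
      exact h0'
    · intro i hi
      have h0 := hcol i
      have h0' : ((∑ p ∈ Finset.univ.filter
          (fun p : Fin G × Fin K => p.1 ≠ i), ft' p i : ℕ) : ℝ) ≤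
          ((T i : ℤ) : ℝ) := by exact_mod_cast h0
      rw [hTz i hi] at h0'
      push_cast at h0' ⊢
      refine le_trans (le_of_eq ?_) h0'
      exact Finset.sum_congr rfl (fun p _ => by rw [Prod.mk.eta])
  · rintro ⟨h2N, fr, ft, hpt, hrow, hcol⟩
    have hfr0 : ∀ (j : Fin G) (k : Fin K),
        ∀ i ∈ Finset.univ.filter (fun i : Fin G => (i : ℕ) < g ∧ i ≠ j),
        (0 : ℝ) ≤ fr j k i := by
      intro j k i hi
      rw [Finset.mem_filter] at hi
      exact (hpt j k i hi.2.1 hi.2.2).1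
    have hft0 : ∀ (i : Fin G), (i : ℕ) < g →
        ∀ p ∈ Finset.univ.filter (fun p : Fin G × Fin K => p.1 ≠ i),
        (0 : ℝ) ≤ ft p.1 p.2 i := by
      intro i hi p hp
      rw [Finset.mem_filter] at hp
      exact (hpt p.1 p.2 i hi (Ne.symm hp.2)).2.1
    refine ⟨?_, ⟨h2N, ?_⟩, ?_⟩
    · intro j k
      have h0 : (0 : ℝ) ≤ (A j k : ℝ) - d :=
        le_trans (Finset.sum_nonneg (hfr0 j k)) (hrow j k)
      have : (d : ℝ) ≤ (A j k : ℝ) := by linarith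
      exact_mod_cast this
    · intro i hi
      have h0 : (0 : ℝ) ≤ (K : ℝ) * ((n i : ℝ) - K * d) :=
        le_trans (Finset.sum_nonneg (hft0 i hi)) (hcol i hi)
      have hKpos : (0 : ℝ) < K := by exact_mod_cast hK
      have : ((K : ℝ) * d) ≤ (n i : ℝ) := by nlinarith
      exact_mod_cast this
    · intro Jr Jt hJt
      have key : ((K * d : ℕ) : ℝ) * ∑ p ∈ Jr, ((Jt.erase p.1).card : ℝ) ≤
          ∑ p ∈ Jr, ((A p.1 p.2 : ℝ) - d) +
          ∑ i ∈ Jt, (K : ℝ) * ((n i : ℝ) - K * d) := by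
        have step1 : ((K * d : ℕ) : ℝ) * ∑ p ∈ Jr, ((Jt.erase p.1).card : ℝ) =
            ∑ p ∈ Jr, ∑ i ∈ Jt.erase p.1, ((K * d : ℕ) : ℝ) := by
          rw [Finset.mul_sum]
          refine Finset.sum_congr rfl (fun p _ => ?_)
          rw [Finset.sum_const, nsmul_eq_mul]
          ring
        have step2 : ∀ p ∈ Jr, ∀ i ∈ Jt.erase p.1,
            ((K * d : ℕ) : ℝ) ≤ fr p.1 p.2 i + ft p.1 p.2 i := by
          intro p _ i hi
          rw [Finset.mem_erase] at hi
          have := (hpt p.1 p.2 i (hJt i hi.2) hi.1).2.2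
          calc ((K * d : ℕ) : ℝ) = (K : ℝ) * d := by push_cast; ring
            _ ≤ _ := this
        have step3 : ∑ p ∈ Jr, ∑ i ∈ Jt.erase p.1, fr p.1 p.2 i ≤
            ∑ p ∈ Jr, ((A p.1 p.2 : ℝ) - d) := by
          refine Finset.sum_le_sum (fun p hp => ?_)
          refine le_trans (Finset.sum_le_sum_of_subset_of_nonneg ?_ ?_) (hrow p.1 p.2)
          · intro i hi
            rw [Finset.mem_erase] at hi
            rw [Finset.mem_filter]
            exact ⟨Finset.mem_univ _, hJt i hi.2, hi.1⟩
          · intro i hi _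
            rw [Finset.mem_filter] at hi
            exact (hpt p.1 p.2 i hi.2.1 hi.2.2).1
        have swap : ∑ p ∈ Jr, ∑ i ∈ Jt.erase p.1, ft p.1 p.2 i =
            ∑ i ∈ Jt, ∑ p ∈ Jr.filter (fun p => p.1 ≠ i), ft p.1 p.2 i := by
          calc ∑ p ∈ Jr, ∑ i ∈ Jt.erase p.1, ft p.1 p.2 i
              = ∑ p ∈ Jr, ∑ i ∈ Jt, if i ≠ p.1 then ft p.1 p.2 i else 0 := by
                refine Finset.sum_congr rfl (fun p _ => ?_)
                rw [← Finset.sum_filter, Finset.filter_ne']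
            _ = ∑ i ∈ Jt, ∑ p ∈ Jr, if i ≠ p.1 then ft p.1 p.2 i else 0 :=
                Finset.sum_comm
            _ = ∑ i ∈ Jt, ∑ p ∈ Jr.filter (fun p => p.1 ≠ i), ft p.1 p.2 i := by
                refine Finset.sum_congr rfl (fun i _ => ?_)
                rw [← Finset.sum_filter]
                refine Finset.sum_congr (Finset.filter_congr (fun p _ => ?_)) (fun p _ => rfl)
                exact ne_comm
        have step4 : ∑ i ∈ Jt, ∑ p ∈ Jr.filter (fun p => p.1 ≠ i), ft p.1 p.2 i ≤
            ∑ i ∈ Jt, (K : ℝ) * ((n i : ℝ) - K * d) := by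
          refine Finset.sum_le_sum (fun i hi => ?_)
          refine le_trans (Finset.sum_le_sum_of_subset_of_nonneg ?_ ?_) (hcol i (hJt i hi))
          · intro p hp
            rw [Finset.mem_filter] at hp ⊢
            exact ⟨Finset.mem_univ _, hp.2⟩
          · intro p hp _
            rw [Finset.mem_filter] at hp
            exact (hpt p.1 p.2 i (hJt i hi) (Ne.symm hp.2)).2.1
        calc ((K * d : ℕ) : ℝ) * ∑ p ∈ Jr, ((Jt.erase p.1).card : ℝ)
            = ∑ p ∈ Jr, ∑ i ∈ Jt.erase p.1, ((K * d : ℕ) : ℝ) := step1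
          _ ≤ ∑ p ∈ Jr, ∑ i ∈ Jt.erase p.1, (fr p.1 p.2 i + ft p.1 p.2 i) := by
              refine Finset.sum_le_sum (fun p hp => Finset.sum_le_sum (fun i hi => ?_))
              exact step2 p hp i hi
          _ = (∑ p ∈ Jr, ∑ i ∈ Jt.erase p.1, fr p.1 p.2 i) +
              (∑ p ∈ Jr, ∑ i ∈ Jt.erase p.1, ft p.1 p.2 i) := by
              rw [← Finset.sum_add_distrib]
              exact Finset.sum_congr rfl (fun p _ => Finset.sum_add_distrib)
          _ ≤ _ := by rw [swap]; exact add_le_add step3 step4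
      exact_mod_cast key
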